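/- Let A be a unital commutative complex Banach algebra and Γ ⊆ Aut(A) a finite group of (continuous) algebra automorphisms. Then any unital algebra homomorphism φ: A^Γ → ℂ extends to a unital algebra homomorphism φ̃: A → ℂ. -/

import Mathlib

/-- The subalgebra of fixed points of a group `Γ` of algebra automorphisms of `A`. -/
def fixedSubalgebra (A : Type*) [CommRing A] [Algebra ℂ A]
    (Γ : Subgroup (A ≃ₐ[ℂ] A)) : Subalgebra ℂ A where
  carrier := {a : A | ∀ g ∈ Γ, g a = a}
  mul_mem' := by
    intro a b ha hb g hg
    rw [map_mul, ha g hg, hb g hg]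
  add_mem' := by
    intro a b ha hb g hg
    rw [map_add, ha g hg, hb g hg]
  one_mem' := fun g _ => map_one g
  algebraMap_mem' := fun r g _ => (g : A ≃ₐ[ℂ] A).commutes r

/-- Let `A` be a unital commutative complex Banach algebra and `Γ` a finite group of
continuous algebra automorphisms of `A`. Then every unital algebra homomorphism
`φ : A^Γ → ℂ` extends to a unital algebra homomorphism `A → ℂ`. -/
theorem stmt_8 {A : Type*} [NormedCommRing A] [NormedAlgebra ℂ A] [CompleteSpace A]
    (Γ : Subgroup (A ≃ₐ[ℂ] A)) [Finite Γ]
    (hcont : ∀ g ∈ Γ, Continuous g)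
    (φ : fixedSubalgebra A Γ →ₐ[ℂ] ℂ) :
    ∃ ψ : A →ₐ[ℂ] ℂ, ∀ x : fixedSubalgebra A Γ, ψ x = φ x := by
  classical
  haveI : Fintype Γ := Fintype.ofFinite Γ
  -- the "norm" (Reynolds-type) map
  set N : A → A := fun a => ∑ g : Γ, (g : A ≃ₐ[ℂ] A) a with hN
  have hNmem : ∀ a : A, N a ∈ fixedSubalgebra A Γ := by
    intro a h hh
    show h (∑ g : Γ, (g : A ≃ₐ[ℂ] A) a) = _
    rw [map_sum]
    exact Fintype.sum_equiv (Equiv.mulLeft (⟨h, hh⟩ : Γ)) _ _ (fun g => rfl)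
  have hNmul : ∀ (a : A) (k : A), k ∈ fixedSubalgebra A Γ → N (a * k) = N a * k := by
    intro a k hk
    simp only [hN, map_mul, Finset.sum_mul]
    refine Finset.sum_congr rfl fun g _ => ?_
    rw [hk g g.2]
  -- the ideal generated by the kernel of φ
  set s : Set A := Subtype.val '' {x : fixedSubalgebra A Γ | φ x = 0} with hs
  have hItop : Ideal.span s ≠ ⊤ := by
    intro htop
    have h1 : (1 : A) ∈ Ideal.span s := htop ▸ Submodule.mem_top
    obtain ⟨c, hsupp, hsum⟩ := Submodule.mem_span_set.mp h1
    have hker : ∀ k ∈ c.support, ∃ k' : fixedSubalgebra A Γ, φ k' = 0 ∧ (k' : A) = k := by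
      intro k hk
      obtain ⟨k', hk'0, hk'c⟩ := hsupp hk
      exact ⟨k', hk'0, hk'c⟩
    choose k' hk'0 hk'c using hker
    -- element of the fixed subalgebra
    set X : fixedSubalgebra A Γ :=
      ∑ k ∈ c.support.attach, (⟨N (c k.1), hNmem _⟩ : fixedSubalgebra A Γ) * k' k.1 k.2 with hX
    have hφX : φ X = 0 := by
      rw [hX, map_sum]
      refine Finset.sum_eq_zero fun k _ => ?_
      rw [map_mul, hk'0 k.1 k.2, mul_zero]
    have hXval : (X : A) = Fintype.card Γ • (1 : A) := by
      push_cast [hX]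
      have : ∀ k ∈ c.support.attach, N (c k.1) * (k' k.1 k.2 : A) = N (c k.1 * k.1) := by
        intro k _
        rw [hk'c k.1 k.2, hNmul _ _ (by rw [← hk'c k.1 k.2]; exact (k' k.1 k.2).2)]
      rw [Finset.sum_congr rfl this, Finset.sum_attach c.support (fun k => N (c k * k))]
      have hsum' : ∑ k ∈ c.support, c k * k = 1 := by
        rw [← hsum, Finsupp.sum]
        exact Finset.sum_congr rfl fun k _ => (smul_eq_mul (α := A) _ _).symm
      have hcomm : ∑ k ∈ c.support, N (c k * k) = N (∑ k ∈ c.support, c k * k) := by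
        simp only [hN, map_sum]
        exact Finset.sum_comm
      rw [hcomm, hsum']
      simp [hN]
    have hX1 : X = Fintype.card Γ • (1 : fixedSubalgebra A Γ) := by
      ext
      simpa using hXval
    rw [hX1, map_nsmul, map_one, nsmul_eq_mul, mul_one] at hφX
    exact_mod_cast Fintype.card_ne_zero (α := Γ) (by exact_mod_cast hφX)
  obtain ⟨M, hM, hIM⟩ := Ideal.exists_le_maximal _ hItop
  haveI := hM
  refine ⟨WeakDual.CharacterSpace.toAlgHom M.toCharacterSpace, fun x => ?_⟩
  have hmem : (x : A) - algebraMap ℂ A (φ x) ∈ M := by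
    apply hIM
    apply Ideal.subset_span
    refine ⟨x - algebraMap ℂ _ (φ x), ?_, ?_⟩
    · simp
    · simp
  have h0 := M.toCharacterSpace_apply_eq_zero_of_mem hmem
  rw [map_sub, sub_eq_zero] at h0
  show M.toCharacterSpace (x : A) = φ x
  rw [h0]
  exact AlgHomClass.commutes _ _
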